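/- Let Z be a finite set, p : Z → ℝ a probability distribution (p_z ≥ 0, Σ_z p_z = 1), and (ρ_z)_{z∈Z} a family of d×d density matrices with average ⟨ρ⟩ = Σ_z p_z ρ_z. For an integer M ≥ 1 define the operators ρ_{1,M} = (Σ_{z∈Z} p_z |z⟩⟨z| ⊗ ρ_z)^{⊗M} and ρ_{2,M} = (Σ_{z∈Z} p_z |z⟩⟨z| ⊗ ⟨ρ⟩)^{⊗M} on the Hilbert space (ℂ^Z ⊗ ℂ^d)^{⊗M}, where {|z⟩}_{z∈Z} is the standard orthonormal basis of ℂ^Z. For a permutation τ of Z let π_τ be the unitary on ℂ^Z with π_τ|z⟩ = |τ(z)⟩, and let U_τ = (π_τ ⊗ I_d)^{⊗M}. Then for every Hermitian operator E on (ℂ^Z ⊗ ℂ^d)^{⊗M} with 0 ⪯ E ⪯ I which satisfies U_τ E U_τ† = E for every permutation τ of Z, the success probability of the corresponding hypothesis test satisfies: (1/2)Tr[E ρ_{1,M}] + (1/2)Tr[(I − E) ρ_{2,M}] ≤ 1/2 + M² Σ_{z∈Z} p_z². -/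

import Mathlib

open Matrix ComplexOrder

/-- The single-copy classical-quantum operator `Σ_z p_z |z⟩⟨z| ⊗ ρ_z` on `ℂ^Z ⊗ ℂ^d`. -/
noncomputable def cqOperator {Z : Type*} [DecidableEq Z] (d : ℕ)
    (p : Z → ℝ) (ρ : Z → Matrix (Fin d) (Fin d) ℂ) :
    Matrix (Z × Fin d) (Z × Fin d) ℂ :=
  Matrix.of fun x y => if x.1 = y.1 then (p x.1 : ℂ) * ρ x.1 x.2 y.2 else 0

/-- The `M`-fold tensor power of an operator, realised on functions `ι → α`. -/
noncomputable def tensorPow {ι α : Type*} [Fintype ι] (σ : Matrix α α ℂ) :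
    Matrix (ι → α) (ι → α) ℂ :=
  Matrix.of fun f g => ∏ i, σ (f i) (g i)

/-- The unitary `π_τ ⊗ I_d` on `ℂ^Z ⊗ ℂ^d` permuting the classical labels. -/
noncomputable def permOperator {Z : Type*} [DecidableEq Z] (d : ℕ) (τ : Equiv.Perm Z) :
    Matrix (Z × Fin d) (Z × Fin d) ℂ :=
  Matrix.of fun x y => if x.1 = τ y.1 ∧ x.2 = y.2 then 1 else 0

/-! ### Auxiliary material -/

section TraceAux
variable {n : Type*} [Fintype n]

lemma posSemidef_iff_eq_transpose_mul_self' {A : Matrix n n ℂ} (hA : A.PosSemidef) :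
    ∃ C : Matrix n n ℂ, A = Cᴴ * C := by
  classical
  open scoped MatrixOrder in
  exact CStarAlgebra.nonneg_iff_eq_star_mul_self.mp hA.nonneg

lemma psd_trace_nonneg' {A : Matrix n n ℂ} (hA : A.PosSemidef) : 0 ≤ A.trace := by
  classical
  refine Finset.sum_nonneg fun i _ => ?_
  simpa [Matrix.mulVec_single, dotProduct, Pi.single_apply, apply_ite] using hA.dotProduct_mulVec_nonneg (Pi.single i 1)

lemma psd_mul_trace_re_nonneg [DecidableEq n] {A B : Matrix n n ℂ}
    (hA : A.PosSemidef) (hB : B.PosSemidef) : 0 ≤ ((A * B).trace).re := by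
  obtain ⟨C, rfl⟩ := posSemidef_iff_eq_transpose_mul_self' hB
  have h1 : (A * (Cᴴ * C)).trace = (C * A * Cᴴ).trace := by
    rw [← Matrix.mul_assoc, Matrix.trace_mul_comm, ← Matrix.mul_assoc]
  rw [h1]
  exact (Complex.nonneg_iff.mp (psd_trace_nonneg' (hA.mul_mul_conjTranspose_same C))).1

lemma psd_mul_trace_re_le [DecidableEq n] {A B : Matrix n n ℂ}
    (hA1 : ((1 : Matrix n n ℂ) - A).PosSemidef) (hB : B.PosSemidef) :
    ((A * B).trace).re ≤ (B.trace).re := by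
  have h := psd_mul_trace_re_nonneg hA1 hB
  have h2 : ((1 : Matrix n n ℂ) - A) * B = B - A * B := by rw [sub_mul, one_mul]
  rw [h2, Matrix.trace_sub, Complex.sub_re] at h
  linarith

lemma ofReal_smul_posSemidef {A : Matrix n n ℂ} (hA : A.PosSemidef) {c : ℝ} (hc : 0 ≤ c) :
    ((c : ℂ) • A).PosSemidef := by
  constructor
  · show ((c : ℂ) • A)ᴴ = (c : ℂ) • A
    rw [Matrix.conjTranspose_smul, hA.1]
    congr 1
    simp [Complex.star_def, Complex.conj_ofReal]
  · intro x
    exact (hA.smul (a := (c:ℂ)) (by exact_mod_cast hc)).2 x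

lemma trace_sum_smul [DecidableEq n] {α : Type*} (s : Finset α) (E : Matrix n n ℂ)
    (c : α → ℝ) (F : α → Matrix n n ℂ) :
    ((E * ∑ x ∈ s, (c x : ℂ) • F x).trace).re = ∑ x ∈ s, c x * ((E * F x).trace).re := by
  rw [Matrix.mul_sum, Matrix.trace_sum, Complex.re_sum]
  exact Finset.sum_congr rfl fun x _ => by
    rw [Matrix.mul_smul, Matrix.trace_smul, smul_eq_mul, Complex.re_ofReal_mul]

end TraceAux

lemma prod_ite_all {ι : Type*} [Fintype ι] (P : ι → Prop) [DecidablePred P] (c : ι → ℂ) :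
    (if ∀ i, P i then ∏ i, c i else 0) = ∏ i, (if P i then c i else 0) := by
  by_cases h : ∀ i, P i
  · rw [if_pos h]; exact Finset.prod_congr rfl fun i _ => by rw [if_pos (h i)]
  · rw [if_neg h]
    push_neg at h
    obtain ⟨i, hi⟩ := h
    exact (Finset.prod_eq_zero (Finset.mem_univ i) (by rw [if_neg hi])).symm

section Blocks
variable {Z : Type*} [Fintype Z] [DecidableEq Z] (d M : ℕ)

/-- `|w⟩⟨w| ⊗ X` realised on `(Fin M) → Z × Fin d`. -/
noncomputable def bigBlock (w : Fin M → Z)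
    (X : Matrix (Fin M → Fin d) (Fin M → Fin d) ℂ) :
    Matrix ((Fin M) → Z × Fin d) ((Fin M) → Z × Fin d) ℂ :=
  Matrix.of fun f g => if (∀ i, (f i).1 = w i) ∧ (∀ i, (g i).1 = w i)
    then X (fun i => (f i).2) (fun i => (g i).2) else 0

/-- Tensor product of a family of `d × d` matrices. -/
noncomputable def tpF (S : Fin M → Matrix (Fin d) (Fin d) ℂ) :
    Matrix (Fin M → Fin d) (Fin M → Fin d) ℂ :=
  Matrix.of fun a b => ∏ i, S i (a i) (b i)

lemma bigBlock_trace (w : Fin M → Z) (X : Matrix (Fin M → Fin d) (Fin M → Fin d) ℂ) :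
    (bigBlock d M w X).trace = X.trace := by
  classical
  unfold Matrix.trace bigBlock
  simp only [Matrix.diag_apply, Matrix.of_apply, and_self]
  rw [← Equiv.sum_comp (Equiv.arrowProdEquivProdArrow (Fin M) (fun _ => Z) (fun _ => Fin d)).symm]
  rw [Fintype.sum_prod_type]
  simp only [Equiv.arrowProdEquivProdArrow]
  simp only [Equiv.coe_fn_symm_mk]
  have : ∀ (u : Fin M → Z) (a : Fin M → Fin d),
      (if ∀ i, ((fun i => (u i, a i)) i).1 = w i then
        X (fun i => ((fun i => (u i, a i)) i).2) (fun i => ((fun i => (u i, a i)) i).2) else 0)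
      = if u = w then X a a else 0 := by
    intro u a
    simp only [funext_iff]
  have h2 : ∀ (u : Fin M → Z), (∀ i, u i = w i) ↔ u = w := fun u => funext_iff.symm
  simp only [h2]
  rw [Finset.sum_comm]
  simp [Finset.sum_ite_eq']

lemma tpF_trace (S : Fin M → Matrix (Fin d) (Fin d) ℂ) :
    (tpF d M S).trace = ∏ i, (S i).trace := by
  unfold Matrix.trace tpF
  simp only [Matrix.diag_apply, Matrix.of_apply]
  rw [Fintype.prod_sum]

lemma tpF_posSemidef (S : Fin M → Matrix (Fin d) (Fin d) ℂ)
    (hS : ∀ i, (S i).PosSemidef) : (tpF d M S).PosSemidef := by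
  have h : ∀ i, ∃ C : Matrix (Fin d) (Fin d) ℂ, S i = Cᴴ * C := fun i =>
    posSemidef_iff_eq_transpose_mul_self' (hS i)
  choose C hC using h
  have key : tpF d M S = (tpF d M C)ᴴ * (tpF d M C) := by
    ext a b
    rw [Matrix.mul_apply]
    unfold tpF
    simp only [Matrix.conjTranspose_apply, Matrix.of_apply]
    have : ∀ c : Fin M → Fin d,
        star (∏ i, C i (c i) (a i)) * ∏ i, C i (c i) (b i)
        = ∏ i, star (C i (c i) (a i)) * C i (c i) (b i) := by
      intro c
      rw [star_prod, ← Finset.prod_mul_distrib]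
    rw [Finset.sum_congr rfl fun c _ => this c,
      ← Fintype.prod_sum (fun i (x : Fin d) => star (C i x (a i)) * C i x (b i))]
    refine Finset.prod_congr rfl fun i _ => ?_
    rw [hC i, Matrix.mul_apply]
    simp [Matrix.conjTranspose_apply]
  rw [key]
  exact Matrix.posSemidef_conjTranspose_mul_self _

lemma bigBlock_posSemidef (w : Fin M → Z) (X : Matrix (Fin M → Fin d) (Fin M → Fin d) ℂ)
    (hX : X.PosSemidef) : (bigBlock d M w X).PosSemidef := by
  obtain ⟨C, hC⟩ := posSemidef_iff_eq_transpose_mul_self' hX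
  have key : bigBlock d M w X =
      (Matrix.of fun (c : Fin M → Fin d) (f : (Fin M) → Z × Fin d) =>
        if ∀ i, (f i).1 = w i then C c (fun i => (f i).2) else 0)ᴴ *
      (Matrix.of fun (c : Fin M → Fin d) (f : (Fin M) → Z × Fin d) =>
        if ∀ i, (f i).1 = w i then C c (fun i => (f i).2) else 0) := by
    ext f g
    rw [Matrix.mul_apply]
    unfold bigBlock
    simp only [Matrix.conjTranspose_apply, Matrix.of_apply]
    by_cases hf : ∀ i, (f i).1 = w i
    · by_cases hg : ∀ i, (g i).1 = w i
      · simp only [hf, hg, if_true, and_self, if_pos]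
        rw [hC, Matrix.mul_apply]
        simp [Matrix.conjTranspose_apply]
      · simp [hf, hg]
    · simp [hf]
  rw [key]
  exact Matrix.posSemidef_conjTranspose_mul_self _

lemma bigBlock_sum {α : Type*} (s : Finset α) (w : Fin M → Z)
    (F : α → Matrix (Fin M → Fin d) (Fin M → Fin d) ℂ) :
    bigBlock d M w (∑ x ∈ s, F x) = ∑ x ∈ s, bigBlock d M w (F x) := by
  ext f g
  simp only [bigBlock, Matrix.of_apply, Matrix.sum_apply]
  by_cases h : (∀ i, (f i).1 = w i) ∧ (∀ i, (g i).1 = w i) <;> simp [h]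

lemma bigBlock_smul (c : ℂ) (w : Fin M → Z)
    (X : Matrix (Fin M → Fin d) (Fin M → Fin d) ℂ) :
    bigBlock d M w (c • X) = c • bigBlock d M w X := by
  ext f g
  simp only [bigBlock, Matrix.of_apply, Matrix.smul_apply]
  by_cases h : (∀ i, (f i).1 = w i) ∧ (∀ i, (g i).1 = w i) <;> simp [h]

lemma bigBlock_add (w : Fin M → Z)
    (X Y : Matrix (Fin M → Fin d) (Fin M → Fin d) ℂ) :
    bigBlock d M w (X + Y) = bigBlock d M w X + bigBlock d M w Y := by
  ext f g
  simp only [bigBlock, Matrix.of_apply, Matrix.add_apply]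
  by_cases h : (∀ i, (f i).1 = w i) ∧ (∀ i, (g i).1 = w i) <;> simp [h]

lemma tensorPow_decomp (p : Z → ℝ) (ρ : Z → Matrix (Fin d) (Fin d) ℂ) :
    tensorPow (ι := Fin M) (cqOperator d p ρ)
      = ∑ w : Fin M → Z, (∏ i, (p (w i) : ℂ)) • bigBlock d M w (tpF d M fun i => ρ (w i)) := by
  classical
  ext f g
  rw [Matrix.sum_apply]
  have step1 : ∀ w : Fin M → Z,
      ((∏ i, (p (w i) : ℂ)) • bigBlock d M w (tpF d M fun i => ρ (w i))) f g
      = ∏ i, (if (f i).1 = w i ∧ (g i).1 = w i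
          then (p (w i) : ℂ) * ρ (w i) (f i).2 (g i).2 else 0) := by
    intro w
    simp only [Matrix.smul_apply, bigBlock, tpF, Matrix.of_apply, smul_eq_mul]
    by_cases h : (∀ i, (f i).1 = w i) ∧ (∀ i, (g i).1 = w i)
    · rw [if_pos h, ← Finset.prod_mul_distrib]
      exact Finset.prod_congr rfl fun i _ => by rw [if_pos ⟨h.1 i, h.2 i⟩]
    · rw [if_neg h, mul_zero]
      rw [not_and_or] at h
      rcases h with h | h <;> push_neg at h <;> obtain ⟨i, hi⟩ := h <;>
        exact (Finset.prod_eq_zero (Finset.mem_univ i) (by simp [hi])).symm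
  rw [Finset.sum_congr rfl fun w _ => step1 w]
  rw [← Fintype.prod_sum (fun i (z : Z) => if (f i).1 = z ∧ (g i).1 = z
      then (p z : ℂ) * ρ z (f i).2 (g i).2 else 0)]
  simp only [tensorPow, cqOperator, Matrix.of_apply]
  refine Finset.prod_congr rfl fun i _ => ?_
  rw [Finset.sum_eq_single (f i).1]
  · by_cases h : (f i).1 = (g i).1
    · rw [if_pos h, if_pos ⟨rfl, h.symm⟩]
    · rw [if_neg h, if_neg]
      rintro ⟨-, h2⟩
      exact h (h2.symm)
  · intro z _ hz
    rw [if_neg (fun hc => hz hc.1.symm)]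
  · intro h
    exact absurd (Finset.mem_univ _) h

lemma permU_apply_left (τ : Equiv.Perm Z) (f h : Fin M → Z × Fin d) :
    tensorPow (ι := Fin M) (permOperator d τ) h f
      = if h = (fun i => (τ (f i).1, (f i).2)) then 1 else 0 := by
  classical
  show (∏ i, permOperator d τ (h i) (f i)) = _
  have : (∏ i, permOperator d τ (h i) (f i))
      = ∏ i, (if (h i) = (τ (f i).1, (f i).2) then (1:ℂ) else 0) := by
    refine Finset.prod_congr rfl fun i _ => ?_
    simp only [permOperator, Matrix.of_apply, Prod.ext_iff]
  rw [this, ← prod_ite_all (fun i => h i = (τ (f i).1, (f i).2)) (fun _ => 1)]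
  simp [funext_iff]

lemma permU_apply_right (τ : Equiv.Perm Z) (f h : Fin M → Z × Fin d) :
    tensorPow (ι := Fin M) (permOperator d τ) f h
      = if h = (fun i => (τ.symm (f i).1, (f i).2)) then 1 else 0 := by
  classical
  rw [permU_apply_left]
  congr 1
  simp only [eq_iff_iff, funext_iff, Prod.ext_iff]
  constructor
  · intro hP i
    refine ⟨?_, (hP i).2.symm⟩
    rw [(hP i).1]; simp
  · intro hP i
    refine ⟨?_, (hP i).2.symm⟩
    rw [(hP i).1]; simp

lemma permU_conj (τ : Equiv.Perm Z) (w : Fin M → Z)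
    (X : Matrix (Fin M → Fin d) (Fin M → Fin d) ℂ) :
    tensorPow (ι := Fin M) (permOperator d τ) * bigBlock d M w X *
      (tensorPow (ι := Fin M) (permOperator d τ))ᴴ
    = bigBlock d M (fun i => τ (w i)) X := by
  classical
  have hUr := permU_apply_right (d := d) (M := M) τ
  ext f g
  have h1 : ∀ g' , (tensorPow (ι := Fin M) (permOperator d τ) * bigBlock d M w X) f g'
      = bigBlock d M w X (fun i => (τ.symm (f i).1, (f i).2)) g' := by
    intro g'
    rw [Matrix.mul_apply]
    rw [Finset.sum_eq_single (fun i => (τ.symm (f i).1, (f i).2))]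
    · rw [hUr, if_pos rfl, one_mul]
    · intro h _ hne
      rw [hUr, if_neg hne, zero_mul]
    · intro h; exact absurd (Finset.mem_univ _) h
  rw [Matrix.mul_apply, Finset.sum_congr rfl fun g' _ => by rw [h1 g']]
  rw [Finset.sum_eq_single (fun i => (τ.symm (g i).1, (g i).2))]
  · rw [Matrix.conjTranspose_apply, hUr, if_pos rfl, star_one, mul_one]
    simp only [bigBlock, Matrix.of_apply]
    refine if_congr ?_ rfl rfl
    constructor
    · rintro ⟨ha, hb⟩
      refine ⟨fun i => ?_, fun i => ?_⟩
      · have h' := ha i; rw [← h']; simp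
      · have h' := hb i; rw [← h']; simp
    · rintro ⟨ha, hb⟩
      refine ⟨fun i => ?_, fun i => ?_⟩
      · show τ.symm (f i).1 = w i; rw [ha i]; simp
      · show τ.symm (g i).1 = w i; rw [hb i]; simp
  · intro h _ hne
    rw [Matrix.conjTranspose_apply, hUr, if_neg hne, star_zero, mul_zero]
  · intro h; exact absurd (Finset.mem_univ _) h

lemma permU_unitary (τ : Equiv.Perm Z) :
    (tensorPow (ι := Fin M) (permOperator d τ))ᴴ * tensorPow (ι := Fin M) (permOperator d τ)
      = (1 : Matrix ((Fin M) → Z × Fin d) ((Fin M) → Z × Fin d) ℂ) := by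
  classical
  ext f g
  rw [Matrix.mul_apply]
  rw [Finset.sum_eq_single (fun i => (τ (f i).1, (f i).2))]
  · rw [Matrix.conjTranspose_apply, permU_apply_left, if_pos rfl, star_one, one_mul]
    rw [permU_apply_right]
    simp only [Matrix.one_apply]
    refine if_congr ?_ rfl rfl
    constructor
    · intro h; funext i
      have hc := congrFun h i
      rw [Prod.ext_iff] at hc
      simp only [Equiv.symm_apply_apply] at hc
      rw [Prod.ext_iff]
      exact ⟨hc.1.symm, hc.2.symm⟩
    · rintro rfl; funext i; simp
  · intro h _ hne
    rw [Matrix.conjTranspose_apply, permU_apply_left, if_neg hne, star_zero, zero_mul]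
  · intro h; exact absurd (Finset.mem_univ _) h

end Blocks

lemma exists_perm_extend {Z : Type*} [Fintype Z] [DecidableEq Z] {M : ℕ}
    (u v : Fin M → Z) (hu : Function.Injective u) (hv : Function.Injective v) :
    ∃ τ : Equiv.Perm Z, ∀ i, τ (u i) = v i := by
  classical
  have h1 : Fintype.card {x // x ∈ Set.range u} = Fintype.card {x // x ∈ Set.range v} := by
    have a1 : Fintype.card {x // x ∈ Set.range u} = M := by
      exact (Fintype.card_congr (Equiv.ofInjective u hu).symm).trans (Fintype.card_fin M)
    have a2 : Fintype.card {x // x ∈ Set.range v} = M := by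
      exact (Fintype.card_congr (Equiv.ofInjective v hv).symm).trans (Fintype.card_fin M)
    rw [a1, a2]
  have hcard : Fintype.card {x // x ∉ Set.range u} = Fintype.card {x // x ∉ Set.range v} := by
    rw [Fintype.card_subtype_compl, Fintype.card_subtype_compl, h1]
  let e : {x // x ∈ Set.range u} ≃ {x // x ∈ Set.range v} :=
    ((Equiv.ofInjective u hu).symm.trans (Equiv.ofInjective v hv))
  let f : {x // x ∉ Set.range u} ≃ {x // x ∉ Set.range v} := Fintype.equivOfCardEq hcard
  refine ⟨(Equiv.sumCompl (fun x => x ∈ Set.range u)).symm.trans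
    ((Equiv.sumCongr e f).trans (Equiv.sumCompl (fun x => x ∈ Set.range v))), fun i => ?_⟩
  have hmem : u i ∈ Set.range u := Set.mem_range_self i
  simp only [Equiv.trans_apply, Equiv.sumCompl_symm_apply_of_pos hmem, Equiv.sumCongr_apply,
    Sum.map_inl, Equiv.sumCompl_apply_inl]
  have he : e ⟨u i, hmem⟩ = ⟨v i, Set.mem_range_self i⟩ := by
    have h2 : (Equiv.ofInjective u hu).symm ⟨u i, hmem⟩ = i := by
      apply (Equiv.ofInjective u hu).injective
      simp [Equiv.ofInjective_apply]
    simp only [e, Equiv.trans_apply, h2, Equiv.ofInjective_apply]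
  rw [he]

lemma marginal_pair {Z : Type*} [Fintype Z] [DecidableEq Z] {M : ℕ}
    (p : Z → ℝ) (hp1 : ∑ z, p z = 1) {i j : Fin M} (hij : i ≠ j) :
    ∑ w : Fin M → Z, (if w i = w j then ∏ k, p (w k) else 0) = ∑ z, p z ^ 2 := by
  classical
  have step1 : ∀ w : Fin M → Z, (if w i = w j then ∏ k, p (w k) else 0)
      = ∑ z, (if w i = z ∧ w j = z then ∏ k, p (w k) else 0) := by
    intro w
    by_cases h : w i = w j
    · rw [if_pos h, Finset.sum_eq_single (w i)]
      · rw [if_pos ⟨rfl, h.symm⟩]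
      · intro z _ hz; rw [if_neg (fun hc => hz hc.1.symm)]
      · intro h; exact absurd (Finset.mem_univ _) h
    · rw [if_neg h]
      refine (Finset.sum_eq_zero fun z _ => ?_).symm
      rw [if_neg (fun hc => h (hc.1.trans hc.2.symm))]
  rw [Finset.sum_congr rfl fun w _ => step1 w, Finset.sum_comm]
  refine Finset.sum_congr rfl fun z _ => ?_
  have step2 : ∀ w : Fin M → Z, (if w i = z ∧ w j = z then ∏ k, p (w k) else 0)
      = ∏ k, (if k = i ∨ k = j then (if w k = z then p (w k) else 0) else p (w k)) := by
    intro w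
    by_cases h : w i = z ∧ w j = z
    · rw [if_pos h]
      refine Finset.prod_congr rfl fun k _ => ?_
      by_cases hk : k = i ∨ k = j
      · rcases hk with rfl | rfl <;> simp [h.1, h.2]
      · rw [if_neg hk]
    · rw [if_neg h, not_and_or] at *
      rcases h with h | h
      · exact (Finset.prod_eq_zero (Finset.mem_univ i) (by simp [h])).symm
      · exact (Finset.prod_eq_zero (Finset.mem_univ j) (by simp [h])).symm
  rw [Finset.sum_congr rfl fun w _ => step2 w,
    ← Fintype.prod_sum (fun k (x : Z) => if k = i ∨ k = j then (if x = z then p x else 0) else p x)]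
  have step3 : ∀ k : Fin M, (∑ x, if k = i ∨ k = j then (if x = z then p x else 0) else p x)
      = if k = i ∨ k = j then p z else 1 := by
    intro k
    by_cases hk : k = i ∨ k = j
    · simp only [hk, if_true]
      rw [Finset.sum_ite_eq' Finset.univ z p]
      simp
    · simp only [hk, if_false, hp1]
  rw [Finset.prod_congr rfl fun k _ => step3 k]
  have hc2 : ({i, j} : Finset (Fin M)).card = 2 := by
    rw [Finset.card_insert_of_notMem (by simp [hij]), Finset.card_singleton]
  calc (∏ k, if k = i ∨ k = j then p z else 1)
      = ∏ k, (if k ∈ ({i, j} : Finset (Fin M)) then p z else 1) := by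
        refine Finset.prod_congr rfl fun k _ => ?_
        congr 1
        simp [Finset.mem_insert]
    _ = ∏ k ∈ Finset.univ ∩ ({i, j} : Finset (Fin M)), p z := Finset.prod_ite_mem _ _ _
    _ = p z ^ 2 := by rw [Finset.univ_inter, Finset.prod_const, hc2]

lemma birthday_bound {Z : Type*} [Fintype Z] [DecidableEq Z] {M : ℕ}
    (p : Z → ℝ) (hp : ∀ z, 0 ≤ p z) (hp1 : ∑ z, p z = 1) :
    ∑ w ∈ Finset.univ.filter (fun w : Fin M → Z => ¬ Function.Injective w), ∏ k, p (w k)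
      ≤ (M : ℝ) ^ 2 * ∑ z, p z ^ 2 := by
  classical
  have hnn : ∀ (w : Fin M → Z) (q : Fin M × Fin M),
      0 ≤ (if w q.1 = w q.2 then ∏ k, p (w k) else 0) := by
    intro w q
    by_cases h : w q.1 = w q.2 <;> simp [h, Finset.prod_nonneg fun k _ => hp (w k)]
  calc ∑ w ∈ Finset.univ.filter (fun w : Fin M → Z => ¬ Function.Injective w), ∏ k, p (w k)
      ≤ ∑ w ∈ Finset.univ.filter (fun w : Fin M → Z => ¬ Function.Injective w),
          ∑ q ∈ Finset.univ.offDiag, (if w q.1 = w q.2 then ∏ k, p (w k) else 0) := by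
        refine Finset.sum_le_sum fun w hw => ?_
        rw [Finset.mem_filter] at hw
        obtain ⟨a, b, hab, hne⟩ := Function.not_injective_iff.mp hw.2
        have hmem : (a, b) ∈ (Finset.univ : Finset (Fin M)).offDiag :=
          Finset.mem_offDiag.mpr ⟨Finset.mem_univ _, Finset.mem_univ _, hne⟩
        have := Finset.single_le_sum (f := fun q : Fin M × Fin M =>
          (if w q.1 = w q.2 then ∏ k, p (w k) else 0)) (fun q _ => hnn w q) hmem
        simpa [hab] using this
    _ ≤ ∑ w : Fin M → Z,
          ∑ q ∈ Finset.univ.offDiag, (if w q.1 = w q.2 then ∏ k, p (w k) else 0) := by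
        refine Finset.sum_le_sum_of_subset_of_nonneg (Finset.filter_subset _ _) fun w _ _ => ?_
        exact Finset.sum_nonneg fun q _ => hnn w q
    _ = ∑ q ∈ Finset.univ.offDiag,
          ∑ w : Fin M → Z, (if w q.1 = w q.2 then ∏ k, p (w k) else 0) := Finset.sum_comm
    _ = ∑ q ∈ Finset.univ.offDiag, ∑ z, p z ^ 2 := by
        refine Finset.sum_congr rfl fun q hq => ?_
        exact marginal_pair p hp1 (Finset.mem_offDiag.mp hq).2.2
    _ = ((Finset.univ : Finset (Fin M)).offDiag.card : ℝ) * ∑ z, p z ^ 2 := by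
        rw [Finset.sum_const, nsmul_eq_mul]
    _ ≤ (M : ℝ) ^ 2 * ∑ z, p z ^ 2 := by
        refine mul_le_mul_of_nonneg_right ?_ (Finset.sum_nonneg fun z _ => sq_nonneg (p z))
        rw [Finset.offDiag_card]
        simp only [Finset.card_univ, Fintype.card_fin]
        calc ((M * M - M : ℕ) : ℝ) ≤ ((M * M : ℕ) : ℝ) := by
              exact_mod_cast Nat.sub_le _ _
          _ = (M : ℝ) ^ 2 := by push_cast; ring

/-- **Theorem 2 of the paper.** Any simulation-free (label-permutation symmetric)
two-outcome POVM `{E, I − E}` distinguishing `M` copies of the true classical-quantum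
ensemble from the one where each conditional state is replaced by the average state
succeeds with probability at most `1/2 + M² Σ_z p_z²`. -/
theorem simulation_free_distinguishing_probability_bound
    {Z : Type*} [Fintype Z] [DecidableEq Z] (d M : ℕ) (hM : 1 ≤ M)
    (p : Z → ℝ) (hp : ∀ z, 0 ≤ p z) (hp1 : ∑ z, p z = 1)
    (ρ : Z → Matrix (Fin d) (Fin d) ℂ)
    (hρ : ∀ z, (ρ z).PosSemidef ∧ (ρ z).trace = 1)
    (ρ1M ρ2M : Matrix ((Fin M) → Z × Fin d) ((Fin M) → Z × Fin d) ℂ)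
    (hρ1M : ρ1M = tensorPow (ι := Fin M) (cqOperator d p ρ))
    (hρ2M : ρ2M = tensorPow (ι := Fin M) (cqOperator d p (fun _ => ∑ z, (p z : ℂ) • ρ z)))
    (E : Matrix ((Fin M) → Z × Fin d) ((Fin M) → Z × Fin d) ℂ)
    (hE0 : E.PosSemidef)
    (hE1 : ((1 : Matrix ((Fin M) → Z × Fin d) ((Fin M) → Z × Fin d) ℂ) - E).PosSemidef)
    (hEsym : ∀ τ : Equiv.Perm Z,
      tensorPow (ι := Fin M) (permOperator d τ) * E *
        (tensorPow (ι := Fin M) (permOperator d τ))ᴴ = E) :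
    (1 / 2) * ((E * ρ1M).trace).re +
      (1 / 2) * ((((1 : Matrix ((Fin M) → Z × Fin d) ((Fin M) → Z × Fin d) ℂ) - E) * ρ2M).trace).re
      ≤ 1 / 2 + (M : ℝ) ^ 2 * ∑ z, (p z) ^ 2 := by
  classical
  subst hρ1M hρ2M
  have hρPSD : ∀ z, (ρ z).PosSemidef := fun z => (hρ z).1
  have hρtr : ∀ z, (ρ z).trace = 1 := fun z => (hρ z).2
  set avg : Matrix (Fin d) (Fin d) ℂ := ∑ z, (p z : ℂ) • ρ z with havg
  have havgPSD : avg.PosSemidef := by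
    rw [havg]
    refine Finset.sum_induction _ _ (fun a b ha hb => ha.add hb) Matrix.PosSemidef.zero
      fun z _ => ofReal_smul_posSemidef (hρPSD z) (hp z)
  have havgtr : avg.trace = 1 := by
    rw [havg, Matrix.trace_sum]
    simp only [Matrix.trace_smul, hρtr, smul_eq_mul, mul_one]
    rw [← Complex.ofReal_sum, hp1, Complex.ofReal_one]
  have hPw0 : ∀ w : Fin M → Z, 0 ≤ ∏ i, p (w i) :=
    fun w => Finset.prod_nonneg fun i _ => hp (w i)
  have hPwsum : ∑ w : Fin M → Z, ∏ i, p (w i) = 1 := by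
    rw [← Fintype.prod_sum (fun (_ : Fin M) (z : Z) => p z)]
    simp [hp1]
  -- decompositions with real scalars
  have hdec1 : tensorPow (ι := Fin M) (cqOperator d p ρ)
      = ∑ w : Fin M → Z, ((∏ i, p (w i) : ℝ) : ℂ) • bigBlock d M w (tpF d M fun i => ρ (w i)) := by
    rw [tensorPow_decomp]
    exact Finset.sum_congr rfl fun w _ => by rw [Complex.ofReal_prod]
  have hdec2 : tensorPow (ι := Fin M) (cqOperator d p (fun _ => avg))
      = ∑ w : Fin M → Z, ((∏ i, p (w i) : ℝ) : ℂ) • bigBlock d M w (tpF d M fun _ => avg) := by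
    rw [tensorPow_decomp]
    exact Finset.sum_congr rfl fun w _ => by rw [Complex.ofReal_prod]
  -- block facts
  have hB1psd : ∀ w : Fin M → Z, (bigBlock d M w (tpF d M fun i => ρ (w i))).PosSemidef :=
    fun w => bigBlock_posSemidef d M w _ (tpF_posSemidef d M _ fun i => hρPSD (w i))
  have hB2psd : ∀ w : Fin M → Z, (bigBlock d M w (tpF d M fun _ => avg)).PosSemidef :=
    fun w => bigBlock_posSemidef d M w _ (tpF_posSemidef d M _ fun _ => havgPSD)
  have hB1tr : ∀ w : Fin M → Z, (bigBlock d M w (tpF d M fun i => ρ (w i))).trace = 1 := by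
    intro w; rw [bigBlock_trace, tpF_trace]; simp [hρtr]
  have hB2tr : ∀ w : Fin M → Z, (bigBlock d M w (tpF d M fun _ => avg)).trace = 1 := by
    intro w; rw [bigBlock_trace, tpF_trace]; simp [havgtr]
  have ht1le : ∀ w : Fin M → Z,
      ((E * bigBlock d M w (tpF d M fun i => ρ (w i))).trace).re ≤ 1 := by
    intro w
    have h := psd_mul_trace_re_le hE1 (hB1psd w)
    rwa [hB1tr w, Complex.one_re] at h
  have ht1ge : ∀ w : Fin M → Z,
      0 ≤ ((E * bigBlock d M w (tpF d M fun i => ρ (w i))).trace).re :=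
    fun w => psd_mul_trace_re_nonneg hE0 (hB1psd w)
  have ht2le : ∀ w : Fin M → Z,
      ((E * bigBlock d M w (tpF d M fun _ => avg)).trace).re ≤ 1 := by
    intro w
    have h := psd_mul_trace_re_le hE1 (hB2psd w)
    rwa [hB2tr w, Complex.one_re] at h
  have ht2ge : ∀ w : Fin M → Z,
      0 ≤ ((E * bigBlock d M w (tpF d M fun _ => avg)).trace).re :=
    fun w => psd_mul_trace_re_nonneg hE0 (hB2psd w)
  -- expand the two goal traces
  have hX1 : ((E * tensorPow (ι := Fin M) (cqOperator d p ρ)).trace).re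
      = ∑ w : Fin M → Z,
          (∏ i, p (w i)) * ((E * bigBlock d M w (tpF d M fun i => ρ (w i))).trace).re := by
    rw [hdec1, trace_sum_smul]
  have hX2 : ((E * tensorPow (ι := Fin M) (cqOperator d p (fun _ => avg))).trace).re
      = ∑ w : Fin M → Z,
          (∏ i, p (w i)) * ((E * bigBlock d M w (tpF d M fun _ => avg)).trace).re := by
    rw [hdec2, trace_sum_smul]
  have htr2 : (tensorPow (ι := Fin M) (cqOperator d p (fun _ => avg))).trace = 1 := by
    rw [hdec2, Matrix.trace_sum]
    simp only [Matrix.trace_smul, hB2tr, smul_eq_mul, mul_one]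
    rw [← Complex.ofReal_sum, hPwsum, Complex.ofReal_one]
  have hsecond : ((((1 : Matrix ((Fin M) → Z × Fin d) ((Fin M) → Z × Fin d) ℂ) - E) *
        tensorPow (ι := Fin M) (cqOperator d p (fun _ => avg))).trace).re
      = 1 - ((E * tensorPow (ι := Fin M) (cqOperator d p (fun _ => avg))).trace).re := by
    rw [sub_mul, one_mul, Matrix.trace_sub, Complex.sub_re, htr2, Complex.one_re]
  rw [hsecond, hX1, hX2]
  -- the key inequality
  have hkey : (∑ w : Fin M → Z,
          (∏ i, p (w i)) * ((E * bigBlock d M w (tpF d M fun i => ρ (w i))).trace).re)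
      - (∑ w : Fin M → Z,
          (∏ i, p (w i)) * ((E * bigBlock d M w (tpF d M fun _ => avg)).trace).re)
      ≤ 2 * ((M : ℝ) ^ 2 * ∑ z, p z ^ 2) := by
    have hS : 0 ≤ ∑ z, p z ^ 2 := Finset.sum_nonneg fun z _ => sq_nonneg (p z)
    by_cases hcard : Fintype.card Z < M
    · -- trivial case: the RHS is already at least 2 · (1/2) = 1
      have hZne : Nonempty Z := by
        by_contra h
        rw [not_nonempty_iff] at h
        rw [Finset.univ_eq_empty, Finset.sum_empty] at hp1
        norm_num at hp1
      have hcZ : 1 ≤ (Fintype.card Z : ℝ) := by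
        have := Fintype.card_pos (α := Z)
        exact_mod_cast this
      have hcheb : (1 : ℝ) ≤ (Fintype.card Z : ℝ) * ∑ z, p z ^ 2 := by
        have := sq_sum_le_card_mul_sum_sq (s := (Finset.univ : Finset Z)) (f := p)
        rw [hp1, one_pow] at this
        simpa [Finset.card_univ] using this
      have hMcZ : (Fintype.card Z : ℝ) ≤ (M : ℝ) := by exact_mod_cast le_of_lt hcard
      have hM1 : (1 : ℝ) ≤ (M : ℝ) := by exact_mod_cast hM
      have h1 : (1 : ℝ) ≤ (M : ℝ) ^ 2 * ∑ z, p z ^ 2 := by nlinarith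
      have hX1le : (∑ w : Fin M → Z,
          (∏ i, p (w i)) * ((E * bigBlock d M w (tpF d M fun i => ρ (w i))).trace).re) ≤ 1 := by
        calc (∑ w : Fin M → Z,
            (∏ i, p (w i)) * ((E * bigBlock d M w (tpF d M fun i => ρ (w i))).trace).re)
            ≤ ∑ w : Fin M → Z, ∏ i, p (w i) := by
              refine Finset.sum_le_sum fun w _ => ?_
              exact mul_le_of_le_one_right (hPw0 w) (ht1le w)
          _ = 1 := hPwsum
      have hX2ge : 0 ≤ ∑ w : Fin M → Z,
          (∏ i, p (w i)) * ((E * bigBlock d M w (tpF d M fun _ => avg)).trace).re :=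
        Finset.sum_nonneg fun w _ => mul_nonneg (hPw0 w) (ht2ge w)
      linarith
    · -- main case
      push_neg at hcard
      obtain ⟨emb⟩ : Nonempty (Fin M ↪ Z) :=
        Function.Embedding.nonempty_of_card_le (by simpa using hcard)
      set w₀ : Fin M → Z := ⇑emb with hw₀def
      have hw₀ : Function.Injective w₀ := emb.injective
      have hinv : ∀ (w : Fin M → Z), Function.Injective w →
          ∀ X : Matrix (Fin M → Fin d) (Fin M → Fin d) ℂ,
          (E * bigBlock d M w X).trace = (E * bigBlock d M w₀ X).trace := by
        intro w hw X
        obtain ⟨τ, hτ⟩ := exists_perm_extend w₀ w hw₀ hw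
        have hw' : (fun i => τ (w₀ i)) = w := funext hτ
        have hUU : (tensorPow (ι := Fin M) (permOperator d τ))ᴴ *
            tensorPow (ι := Fin M) (permOperator d τ) = 1 := permU_unitary d M τ
        calc (E * bigBlock d M w X).trace
            = ((tensorPow (ι := Fin M) (permOperator d τ) * E *
                (tensorPow (ι := Fin M) (permOperator d τ))ᴴ) *
               (tensorPow (ι := Fin M) (permOperator d τ) * bigBlock d M w₀ X *
                (tensorPow (ι := Fin M) (permOperator d τ))ᴴ)).trace := by
              rw [hEsym τ, permU_conj d M τ w₀ X, hw']
          _ = ((tensorPow (ι := Fin M) (permOperator d τ) * E) *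
                (bigBlock d M w₀ X * (tensorPow (ι := Fin M) (permOperator d τ))ᴴ)).trace := by
              congr 1
              calc (tensorPow (ι := Fin M) (permOperator d τ) * E *
                  (tensorPow (ι := Fin M) (permOperator d τ))ᴴ) *
                 (tensorPow (ι := Fin M) (permOperator d τ) * bigBlock d M w₀ X *
                  (tensorPow (ι := Fin M) (permOperator d τ))ᴴ)
                  = ((tensorPow (ι := Fin M) (permOperator d τ) * E) *
                    ((tensorPow (ι := Fin M) (permOperator d τ))ᴴ *
                      tensorPow (ι := Fin M) (permOperator d τ))) *
                    (bigBlock d M w₀ X * (tensorPow (ι := Fin M) (permOperator d τ))ᴴ) := by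
                    noncomm_ring
                _ = _ := by rw [hUU, Matrix.mul_one]
          _ = (E * bigBlock d M w₀ X).trace := by
              rw [Matrix.trace_mul_comm]
              have e2 : (bigBlock d M w₀ X * (tensorPow (ι := Fin M) (permOperator d τ))ᴴ) *
                  (tensorPow (ι := Fin M) (permOperator d τ) * E)
                  = (bigBlock d M w₀ X * ((tensorPow (ι := Fin M) (permOperator d τ))ᴴ *
                      tensorPow (ι := Fin M) (permOperator d τ))) * E := by noncomm_ring
              rw [e2, hUU, Matrix.mul_one, Matrix.trace_mul_comm]
      -- abbreviations for injective / non-injective parts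
      have hq0 : 0 ≤ ∑ w ∈ Finset.univ.filter (fun w : Fin M → Z => ¬ Function.Injective w),
          ∏ i, p (w i) := Finset.sum_nonneg fun w _ => hPw0 w
      have hcq : (∑ w ∈ Finset.univ.filter (fun w : Fin M → Z => Function.Injective w),
            ∏ i, p (w i))
          + (∑ w ∈ Finset.univ.filter (fun w : Fin M → Z => ¬ Function.Injective w),
            ∏ i, p (w i)) = 1 := by
        rw [Finset.sum_filter_add_sum_filter_not]
        exact hPwsum
      -- the big matrices A and N
      have hANV : (∑ w ∈ Finset.univ.filter (fun w : Fin M → Z => Function.Injective w),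
            ((∏ i, p (w i) : ℝ) : ℂ) • tpF d M (fun i => ρ (w i)))
          + (∑ w ∈ Finset.univ.filter (fun w : Fin M → Z => ¬ Function.Injective w),
            ((∏ i, p (w i) : ℝ) : ℂ) • tpF d M (fun i => ρ (w i)))
          = tpF d M (fun _ => avg) := by
        rw [Finset.sum_filter_add_sum_filter_not]
        ext a b
        rw [Matrix.sum_apply]
        have hterm : ∀ w : Fin M → Z,
            (((∏ i, p (w i) : ℝ) : ℂ) • tpF d M (fun i => ρ (w i))) a b
            = ∏ i, ((p (w i) : ℂ) * ρ (w i) (a i) (b i)) := by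
          intro w
          rw [Matrix.smul_apply, smul_eq_mul, Complex.ofReal_prod]
          show (∏ i, (p (w i) : ℂ)) * ∏ i, ρ (w i) (a i) (b i) = _
          rw [← Finset.prod_mul_distrib]
        rw [Finset.sum_congr rfl fun w _ => hterm w,
          ← Fintype.prod_sum (fun i (z : Z) => (p z : ℂ) * ρ z (a i) (b i))]
        show _ = ∏ i, avg (a i) (b i)
        refine Finset.prod_congr rfl fun i _ => ?_
        rw [havg, Matrix.sum_apply]
        exact Finset.sum_congr rfl fun z _ => by rw [Matrix.smul_apply, smul_eq_mul]
      have hNpsd : (∑ w ∈ Finset.univ.filter (fun w : Fin M → Z => ¬ Function.Injective w),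
          ((∏ i, p (w i) : ℝ) : ℂ) • tpF d M (fun i => ρ (w i))).PosSemidef := by
        refine Finset.sum_induction _ _ (fun a b ha hb => ha.add hb) Matrix.PosSemidef.zero
          fun w _ => ofReal_smul_posSemidef (tpF_posSemidef d M _ fun i => hρPSD (w i)) (hPw0 w)
      have hGN : 0 ≤ ((E * bigBlock d M w₀ (∑ w ∈ Finset.univ.filter
            (fun w : Fin M → Z => ¬ Function.Injective w),
            ((∏ i, p (w i) : ℝ) : ℂ) • tpF d M (fun i => ρ (w i)))).trace).re :=
        psd_mul_trace_re_nonneg hE0 (bigBlock_posSemidef d M w₀ _ hNpsd)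
      -- G of A via linearity
      have hblocklin : ∀ (s : Finset (Fin M → Z)),
          bigBlock d M w₀ (∑ w ∈ s, ((∏ i, p (w i) : ℝ) : ℂ) • tpF d M (fun i => ρ (w i)))
          = ∑ w ∈ s, ((∏ i, p (w i) : ℝ) : ℂ) • bigBlock d M w₀ (tpF d M (fun i => ρ (w i))) := by
        intro s
        rw [bigBlock_sum]
        exact Finset.sum_congr rfl fun w _ => bigBlock_smul d M _ w₀ _
      have hGA : ((E * bigBlock d M w₀ (∑ w ∈ Finset.univ.filter
            (fun w : Fin M → Z => Function.Injective w),
            ((∏ i, p (w i) : ℝ) : ℂ) • tpF d M (fun i => ρ (w i)))).trace).re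
          = ∑ w ∈ Finset.univ.filter (fun w : Fin M → Z => Function.Injective w),
            (∏ i, p (w i)) * ((E * bigBlock d M w₀ (tpF d M (fun i => ρ (w i)))).trace).re := by
        rw [hblocklin, trace_sum_smul]
      -- G V = G A + G N
      have hGV_split : ((E * bigBlock d M w₀ (tpF d M fun _ => avg)).trace).re
          = ((E * bigBlock d M w₀ (∑ w ∈ Finset.univ.filter
              (fun w : Fin M → Z => Function.Injective w),
              ((∏ i, p (w i) : ℝ) : ℂ) • tpF d M (fun i => ρ (w i)))).trace).re
            + ((E * bigBlock d M w₀ (∑ w ∈ Finset.univ.filter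
              (fun w : Fin M → Z => ¬ Function.Injective w),
              ((∏ i, p (w i) : ℝ) : ℂ) • tpF d M (fun i => ρ (w i)))).trace).re := by
        rw [← hANV, bigBlock_add, Matrix.mul_add, Matrix.trace_add, Complex.add_re]
      -- injective sums
      have hS1inj : ∑ w ∈ Finset.univ.filter (fun w : Fin M → Z => Function.Injective w),
            (∏ i, p (w i)) * ((E * bigBlock d M w (tpF d M fun i => ρ (w i))).trace).re
          = ∑ w ∈ Finset.univ.filter (fun w : Fin M → Z => Function.Injective w),
            (∏ i, p (w i)) * ((E * bigBlock d M w₀ (tpF d M (fun i => ρ (w i)))).trace).re := by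
        refine Finset.sum_congr rfl fun w hw => ?_
        rw [hinv w (Finset.mem_filter.mp hw).2]
      have hS2inj : ∑ w ∈ Finset.univ.filter (fun w : Fin M → Z => Function.Injective w),
            (∏ i, p (w i)) * ((E * bigBlock d M w (tpF d M fun _ => avg)).trace).re
          = (∑ w ∈ Finset.univ.filter (fun w : Fin M → Z => Function.Injective w),
              (∏ i, p (w i))) * ((E * bigBlock d M w₀ (tpF d M fun _ => avg)).trace).re := by
        rw [Finset.sum_mul]
        refine Finset.sum_congr rfl fun w hw => ?_
        rw [hinv w (Finset.mem_filter.mp hw).2]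
      -- non-injective sums bounds
      have hS1non : ∑ w ∈ Finset.univ.filter (fun w : Fin M → Z => ¬ Function.Injective w),
            (∏ i, p (w i)) * ((E * bigBlock d M w (tpF d M fun i => ρ (w i))).trace).re
          ≤ ∑ w ∈ Finset.univ.filter (fun w : Fin M → Z => ¬ Function.Injective w),
            ∏ i, p (w i) :=
        Finset.sum_le_sum fun w _ => mul_le_of_le_one_right (hPw0 w) (ht1le w)
      have hS2non : 0 ≤ ∑ w ∈ Finset.univ.filter (fun w : Fin M → Z => ¬ Function.Injective w),
            (∏ i, p (w i)) * ((E * bigBlock d M w (tpF d M fun _ => avg)).trace).re :=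
        Finset.sum_nonneg fun w _ => mul_nonneg (hPw0 w) (ht2ge w)
      -- split the full sums
      have hsplit1 : (∑ w : Fin M → Z,
            (∏ i, p (w i)) * ((E * bigBlock d M w (tpF d M fun i => ρ (w i))).trace).re)
          = (∑ w ∈ Finset.univ.filter (fun w : Fin M → Z => Function.Injective w),
              (∏ i, p (w i)) * ((E * bigBlock d M w (tpF d M fun i => ρ (w i))).trace).re)
            + ∑ w ∈ Finset.univ.filter (fun w : Fin M → Z => ¬ Function.Injective w),
              (∏ i, p (w i)) * ((E * bigBlock d M w (tpF d M fun i => ρ (w i))).trace).re :=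
        (Finset.sum_filter_add_sum_filter_not _ _ _).symm
      have hsplit2 : (∑ w : Fin M → Z,
            (∏ i, p (w i)) * ((E * bigBlock d M w (tpF d M fun _ => avg)).trace).re)
          = (∑ w ∈ Finset.univ.filter (fun w : Fin M → Z => Function.Injective w),
              (∏ i, p (w i)) * ((E * bigBlock d M w (tpF d M fun _ => avg)).trace).re)
            + ∑ w ∈ Finset.univ.filter (fun w : Fin M → Z => ¬ Function.Injective w),
              (∏ i, p (w i)) * ((E * bigBlock d M w (tpF d M fun _ => avg)).trace).re :=
        (Finset.sum_filter_add_sum_filter_not _ _ _).symm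
      -- bounds on G V
      have hGVle : ((E * bigBlock d M w₀ (tpF d M fun _ => avg)).trace).re ≤ 1 := ht2le w₀
      have hGVge : 0 ≤ ((E * bigBlock d M w₀ (tpF d M fun _ => avg)).trace).re := ht2ge w₀
      -- birthday
      have hbday := birthday_bound (M := M) p hp hp1
      -- put it together
      set q : ℝ := ∑ w ∈ Finset.univ.filter (fun w : Fin M → Z => ¬ Function.Injective w),
        ∏ i, p (w i) with hqdef
      set c : ℝ := ∑ w ∈ Finset.univ.filter (fun w : Fin M → Z => Function.Injective w),
        ∏ i, p (w i) with hcdef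
      set GV : ℝ := ((E * bigBlock d M w₀ (tpF d M fun _ => avg)).trace).re with hGVdef
      have hqc : q = 1 - c := by linarith
      have hqGV : q * GV ≤ q := mul_le_of_le_one_right hq0 hGVle
      have h8 : (1 - c) * GV = GV - c * GV := by ring
      -- G A ≤ c * GV + q
      have hGAle : (∑ w ∈ Finset.univ.filter (fun w : Fin M → Z => Function.Injective w),
            (∏ i, p (w i)) * ((E * bigBlock d M w₀ (tpF d M (fun i => ρ (w i)))).trace).re)
          ≤ c * GV + q := by
        have hGA' := hGA
        have hq' : q * GV ≤ q := hqGV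
        rw [← hGA']
        have := hGV_split
        rw [hqc] at hq'
        rw [h8] at hq'
        linarith
      linarith
  linarith
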